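/- For every a > 1 and every ε ∈ Σ, the derivative of the function b ↦ p(ε)(a, b) at b = 0 equals 1/(a ε₋₂). -/

import Mathlib

open Filter Topology

/-- Depth-`k` truncation of the continued fraction
`r_n(ε)(a,b) = 1/(aε_n + b/(aε_{n+1} + b/(aε_{n+2} + ⋯)))`. -/
noncomputable def rTrunc (a b : ℝ) (ε : ℤ → ℝ) : ℕ → ℤ → ℝ
  | 0, n => 1 / (a * ε n)
  | k + 1, n => 1 / (a * ε n + b * rTrunc a b ε k (n + 1))

/-- The continued fraction `r_n(ε)(a,b)`, as the limit of its finite truncations. -/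
noncomputable def rCF (a b : ℝ) (ε : ℤ → ℝ) (n : ℤ) : ℝ :=
  limUnder atTop (fun k => rTrunc a b ε k n)

/-- Depth-`k` truncation of the continued fraction
`s_n(ε)(a,b) = 1/(-aε_n + b/(-aε_{n-1} + b/(-aε_{n-2} + ⋯)))`. -/
noncomputable def sTrunc (a b : ℝ) (ε : ℤ → ℝ) : ℕ → ℤ → ℝ
  | 0, n => 1 / (-(a * ε n))
  | k + 1, n => 1 / (-(a * ε n) + b * sTrunc a b ε k (n - 1))

/-- The continued fraction `s_n(ε)(a,b)`, as the limit of its finite truncations. -/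
noncomputable def sCF (a b : ℝ) (ε : ℤ → ℝ) (n : ℤ) : ℝ :=
  limUnder atTop (fun k => sTrunc a b ε k n)

/-- `p(ε)(a,b) = 1 - b s₋₂ + b² s₋₂s₋₃ - b³ s₋₂s₋₃s₋₄ + ⋯`. -/
noncomputable def pFun (a b : ℝ) (ε : ℤ → ℝ) : ℝ :=
  ∑' k : ℕ, (-b) ^ k * ∏ j ∈ Finset.range k, sCF a b ε (-2 - (j : ℤ))

/-- `q(ε)(a,b) = r₀ - r₀r₁ + r₀r₁r₂ - ⋯`. -/
noncomputable def qFun (a b : ℝ) (ε : ℤ → ℝ) : ℝ :=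
  ∑' n : ℕ, (-1 : ℝ) ^ n * ∏ j ∈ Finset.range (n + 1), rCF a b ε (j : ℤ)

section AuxLemmas
variable {a b : ℝ} {ε : ℤ → ℝ}

lemma sTrunc_zero (a b : ℝ) (ε : ℤ → ℝ) (n : ℤ) :
    sTrunc a b ε 0 n = 1 / (-(a * ε n)) := rfl

lemma sTrunc_succ (a b : ℝ) (ε : ℤ → ℝ) (k : ℕ) (n : ℤ) :
    sTrunc a b ε (k + 1) n = 1 / (-(a * ε n) + b * sTrunc a b ε k (n - 1)) := rfl

lemma absε (hε : ∀ n : ℤ, ε n = 1 ∨ ε n = -1) (n : ℤ) : |ε n| = 1 := by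
  rcases hε n with h | h <;> simp [h]

lemma one_div_sub_le {x y : ℝ} (hx : 1 ≤ |x|) (hy : 1 ≤ |y|) :
    |1 / x - 1 / y| ≤ |x - y| := by
  have hx0 : x ≠ 0 := by intro h; rw [h, abs_zero] at hx; linarith
  have hy0 : y ≠ 0 := by intro h; rw [h, abs_zero] at hy; linarith
  rw [div_sub_div _ _ hx0 hy0, one_mul, mul_one, abs_div, abs_mul]
  calc |y - x| / (|x| * |y|) ≤ |y - x| := by
        apply div_le_self (abs_nonneg _) (by nlinarith)
    _ = |x - y| := abs_sub_comm _ _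

lemma sTrunc_abs_le (ha : 1 < a) (hε : ∀ n : ℤ, |ε n| = 1) (hb : 1 ≤ a - |b|) :
    ∀ k n, |sTrunc a b ε k n| ≤ 1 := by
  intro k
  induction k with
  | zero =>
      intro n
      rw [sTrunc_zero, abs_div, abs_one, abs_neg, abs_mul, hε, mul_one,
        abs_of_pos (show (0:ℝ) < a by linarith), div_le_one (by linarith)]
      linarith
  | succ k ih =>
      intro n
      rw [sTrunc_succ, abs_div, abs_one]
      have h1 : |a * ε n| = a := by
        rw [abs_mul, hε, mul_one]; exact abs_of_pos (by linarith)
      have h2 : |b * sTrunc a b ε k (n - 1)| ≤ |b| := by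
        rw [abs_mul]
        calc |b| * |sTrunc a b ε k (n-1)| ≤ |b| * 1 :=
              mul_le_mul_of_nonneg_left (ih _) (abs_nonneg b)
          _ = |b| := mul_one _
      have h3 : 1 ≤ |(-(a * ε n)) + b * sTrunc a b ε k (n - 1)| := by
        have := abs_add_le ((-(a * ε n)) + b * sTrunc a b ε k (n - 1)) (-(b * sTrunc a b ε k (n - 1)))
        simp only [add_neg_cancel_right, abs_neg] at this
        rw [h1] at this; linarith
      rw [div_le_one (by linarith)]; exact h3

lemma sTrunc_denom (ha : 1 < a) (hε : ∀ n : ℤ, |ε n| = 1) (hb : 1 ≤ a - |b|)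
    (k : ℕ) (n m : ℤ) : 1 ≤ |(-(a * ε n)) + b * sTrunc a b ε k m| := by
  have h1 : |a * ε n| = a := by
    rw [abs_mul, hε, mul_one]; exact abs_of_pos (by linarith)
  have h2 : |b * sTrunc a b ε k m| ≤ |b| := by
    rw [abs_mul]
    calc |b| * |sTrunc a b ε k m| ≤ |b| * 1 :=
          mul_le_mul_of_nonneg_left (sTrunc_abs_le ha hε hb _ _) (abs_nonneg b)
      _ = |b| := mul_one _
  have := abs_add_le ((-(a * ε n)) + b * sTrunc a b ε k m) (-(b * sTrunc a b ε k m))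
  simp only [add_neg_cancel_right, abs_neg] at this
  rw [h1] at this; linarith

lemma sTrunc_diff (ha : 1 < a) (hε : ∀ n : ℤ, |ε n| = 1) (hb : 1 ≤ a - |b|) :
    ∀ k n, |sTrunc a b ε (k + 1) n - sTrunc a b ε k n| ≤ |b| ^ (k + 1) := by
  intro k
  induction k with
  | zero =>
      intro n
      have hc : (1:ℝ) ≤ |(-(a * ε n))| := by
        rw [abs_neg, abs_mul, hε, mul_one, abs_of_pos (show (0:ℝ) < a by linarith)]; linarith
      have hd := sTrunc_denom ha hε hb 0 n (n - 1)
      rw [sTrunc_succ, sTrunc_zero a b ε n]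
      calc |1 / ((-(a * ε n)) + b * sTrunc a b ε 0 (n - 1)) - 1 / (-(a * ε n))|
          ≤ |((-(a * ε n)) + b * sTrunc a b ε 0 (n - 1)) - (-(a * ε n))| :=
            one_div_sub_le hd hc
        _ = |b * sTrunc a b ε 0 (n - 1)| := by ring_nf
        _ ≤ |b| ^ 1 := by
            rw [abs_mul, pow_one]
            calc |b| * |sTrunc a b ε 0 (n-1)| ≤ |b| * 1 :=
                  mul_le_mul_of_nonneg_left (sTrunc_abs_le ha hε hb _ _) (abs_nonneg b)
              _ = |b| := mul_one _
  | succ k ih =>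
      intro n
      have hd1 := sTrunc_denom ha hε hb (k + 1) n (n - 1)
      have hd2 := sTrunc_denom ha hε hb k n (n - 1)
      rw [sTrunc_succ a b ε (k + 1) n, sTrunc_succ a b ε k n]
      calc |1 / ((-(a * ε n)) + b * sTrunc a b ε (k + 1) (n - 1))
              - 1 / ((-(a * ε n)) + b * sTrunc a b ε k (n - 1))|
          ≤ |((-(a * ε n)) + b * sTrunc a b ε (k + 1) (n - 1))
              - ((-(a * ε n)) + b * sTrunc a b ε k (n - 1))| := one_div_sub_le hd1 hd2
        _ = |b| * |sTrunc a b ε (k + 1) (n - 1) - sTrunc a b ε k (n - 1)| := by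
            rw [← abs_mul]; ring_nf
        _ ≤ |b| * |b| ^ (k + 1) := mul_le_mul_of_nonneg_left (ih _) (abs_nonneg b)
        _ = |b| ^ (k + 2) := by ring

lemma sCF_tendsto (ha : 1 < a) (hε : ∀ n : ℤ, |ε n| = 1) (hb : 1 ≤ a - |b|)
    (hb2 : |b| < 1) (n : ℤ) :
    Tendsto (fun k => sTrunc a b ε k n) atTop (𝓝 (sCF a b ε n)) := by
  have hcs : CauchySeq (fun k => sTrunc a b ε k n) := by
    apply cauchySeq_of_le_geometric |b| |b| hb2
    intro k
    rw [dist_eq_norm, Real.norm_eq_abs, abs_sub_comm]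
    calc |sTrunc a b ε (k + 1) n - sTrunc a b ε k n| ≤ |b| ^ (k + 1) :=
          sTrunc_diff ha hε hb k n
      _ = |b| * |b| ^ k := by ring
  obtain ⟨l, hl⟩ := cauchySeq_tendsto_of_complete hcs
  unfold sCF; rwa [hl.limUnder_eq]

lemma sCF_abs_le (ha : 1 < a) (hε : ∀ n : ℤ, |ε n| = 1) (hb : 1 ≤ a - |b|)
    (hb2 : |b| < 1) (n : ℤ) : |sCF a b ε n| ≤ 1 :=
  le_of_tendsto ((sCF_tendsto ha hε hb hb2 n).abs)
    (Eventually.of_forall (fun k => sTrunc_abs_le ha hε hb k n))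

lemma sCF_denom (ha : 1 < a) (hε : ∀ n : ℤ, |ε n| = 1) (hb : 1 ≤ a - |b|)
    (hb2 : |b| < 1) (n m : ℤ) : 1 ≤ |(-(a * ε n)) + b * sCF a b ε m| := by
  have h1 : |a * ε n| = a := by
    rw [abs_mul, hε, mul_one]; exact abs_of_pos (by linarith)
  have h2 : |b * sCF a b ε m| ≤ |b| := by
    rw [abs_mul]
    calc |b| * |sCF a b ε m| ≤ |b| * 1 :=
          mul_le_mul_of_nonneg_left (sCF_abs_le ha hε hb hb2 m) (abs_nonneg b)
      _ = |b| := mul_one _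
  have := abs_add_le ((-(a * ε n)) + b * sCF a b ε m) (-(b * sCF a b ε m))
  simp only [add_neg_cancel_right, abs_neg] at this
  rw [h1] at this; linarith

lemma sCF_rec (ha : 1 < a) (hε : ∀ n : ℤ, |ε n| = 1) (hb : 1 ≤ a - |b|)
    (hb2 : |b| < 1) (n : ℤ) :
    sCF a b ε n = 1 / (-(a * ε n) + b * sCF a b ε (n - 1)) := by
  have h1 : Tendsto (fun k => sTrunc a b ε (k + 1) n) atTop (𝓝 (sCF a b ε n)) :=
    (sCF_tendsto ha hε hb hb2 n).comp (tendsto_add_atTop_nat 1)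
  have hne : (-(a * ε n) + b * sCF a b ε (n - 1)) ≠ 0 := by
    intro h
    have := sCF_denom ha hε hb hb2 n (n - 1)
    rw [h, abs_zero] at this; linarith
  have h2 : Tendsto (fun k => 1 / (-(a * ε n) + b * sTrunc a b ε k (n - 1))) atTop
      (𝓝 (1 / (-(a * ε n) + b * sCF a b ε (n - 1)))) := by
    apply Tendsto.div tendsto_const_nhds _ hne
    exact tendsto_const_nhds.add ((sCF_tendsto ha hε hb hb2 (n - 1)).const_mul b)
  have h3 : (fun k => sTrunc a b ε (k + 1) n)
      = fun k => 1 / (-(a * ε n) + b * sTrunc a b ε k (n - 1)) := by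
    funext k; exact sTrunc_succ a b ε k n
  rw [h3] at h1
  exact tendsto_nhds_unique h1 h2

lemma sCF_at_zero (ha : 1 < a) (hε : ∀ n : ℤ, |ε n| = 1) (n : ℤ) :
    sCF a 0 ε n = 1 / (-(a * ε n)) := by
  have h : ∀ k, sTrunc a 0 ε k n = 1 / (-(a * ε n)) := by
    intro k
    cases k with
    | zero => exact sTrunc_zero a 0 ε n
    | succ k => rw [sTrunc_succ]; norm_num
  have : Tendsto (fun k => sTrunc a 0 ε k n) atTop (𝓝 (1 / (-(a * ε n)))) := by
    simp only [h]; exact tendsto_const_nhds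
  unfold sCF; rw [this.limUnder_eq]

lemma sCF_diff (ha : 1 < a) (hε : ∀ n : ℤ, |ε n| = 1) (hb : 1 ≤ a - |b|)
    (hb2 : |b| < 1) (n : ℤ) : |sCF a b ε n - sCF a 0 ε n| ≤ |b| := by
  rw [sCF_rec ha hε hb hb2 n, sCF_at_zero ha hε n]
  have hc : (1:ℝ) ≤ |(-(a * ε n))| := by
    rw [abs_neg, abs_mul, hε, mul_one, abs_of_pos (show (0:ℝ) < a by linarith)]; linarith
  calc |1 / (-(a * ε n) + b * sCF a b ε (n - 1)) - 1 / (-(a * ε n))|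
      ≤ |(-(a * ε n) + b * sCF a b ε (n - 1)) - (-(a * ε n))| :=
        one_div_sub_le (sCF_denom ha hε hb hb2 n (n - 1)) hc
    _ = |b * sCF a b ε (n - 1)| := by ring_nf
    _ ≤ |b| := by
        rw [abs_mul]
        calc |b| * |sCF a b ε (n - 1)| ≤ |b| * 1 :=
              mul_le_mul_of_nonneg_left (sCF_abs_le ha hε hb hb2 _) (abs_nonneg b)
          _ = |b| := mul_one _

lemma prod_abs_le (ha : 1 < a) (hε : ∀ n : ℤ, |ε n| = 1) (hb : 1 ≤ a - |b|)
    (hb2 : |b| < 1) (k : ℕ) :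
    |∏ j ∈ Finset.range k, sCF a b ε (-2 - (j : ℤ))| ≤ 1 := by
  rw [Finset.abs_prod]
  apply Finset.prod_le_one
  · intro i _; exact abs_nonneg _
  · intro i _; exact sCF_abs_le ha hε hb hb2 _

lemma term_abs_le (ha : 1 < a) (hε : ∀ n : ℤ, |ε n| = 1) (hb : 1 ≤ a - |b|)
    (hb2 : |b| < 1) (k : ℕ) :
    |(-b) ^ k * ∏ j ∈ Finset.range k, sCF a b ε (-2 - (j : ℤ))| ≤ |b| ^ k := by
  rw [abs_mul, abs_pow, abs_neg]
  calc |b| ^ k * |∏ j ∈ Finset.range k, sCF a b ε (-2 - (j : ℤ))| ≤ |b| ^ k * 1 :=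
        mul_le_mul_of_nonneg_left (prod_abs_le ha hε hb hb2 k) (by positivity)
    _ = |b| ^ k := mul_one _

lemma pSummable (ha : 1 < a) (hε : ∀ n : ℤ, |ε n| = 1) (hb : 1 ≤ a - |b|)
    (hb2 : |b| < 1) :
    Summable (fun k : ℕ => (-b) ^ k * ∏ j ∈ Finset.range k, sCF a b ε (-2 - (j : ℤ))) := by
  apply Summable.of_norm_bounded (summable_geometric_of_lt_one (abs_nonneg b) hb2)
  intro k
  rw [Real.norm_eq_abs]
  exact term_abs_le ha hε hb hb2 k

lemma pFun_at_zero (ha : 1 < a) (hε : ∀ n : ℤ, |ε n| = 1) : pFun a 0 ε = 1 := by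
  unfold pFun
  have h : ∀ k : ℕ, (-(0:ℝ)) ^ k * ∏ j ∈ Finset.range k, sCF a 0 ε (-2 - (j : ℤ))
      = if k = 0 then 1 else 0 := by
    intro k
    cases k with
    | zero => simp
    | succ k => simp [zero_pow]
  rw [tsum_congr h]
  exact tsum_ite_eq 0 1

lemma pFun_key (ha : 1 < a) (hε : ∀ n : ℤ, |ε n| = 1) (hb : 1 ≤ a - |b|)
    (hb2 : |b| ≤ 1/2) :
    |pFun a b ε - 1 + b * sCF a 0 ε (-2)| ≤ 3 * b ^ 2 := by
  have hb2' : |b| < 1 := by linarith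
  set f : ℕ → ℝ := fun k => (-b) ^ k * ∏ j ∈ Finset.range k, sCF a b ε (-2 - (j : ℤ)) with hf
  have hsum : Summable f := pSummable ha hε hb hb2'
  have hsum1 : Summable (fun k => f (k + 1)) := (summable_nat_add_iff 1).mpr hsum
  have hsum2 : Summable (fun k => f (k + 2)) := (summable_nat_add_iff 2).mpr hsum
  have hsplit : pFun a b ε = f 0 + (f 1 + ∑' k, f (k + 2)) := by
    rw [show pFun a b ε = ∑' k, f k from rfl, Summable.tsum_eq_zero_add hsum,
      Summable.tsum_eq_zero_add hsum1]
  have hf0 : f 0 = 1 := by simp [hf]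
  have hf1 : f 1 = -b * sCF a b ε (-2) := by
    simp [hf]
  -- tail bound
  have htail : |∑' k, f (k + 2)| ≤ 2 * b ^ 2 := by
    have hg : Summable (fun k : ℕ => |b| ^ (k + 2)) := by
      apply Summable.of_nonneg_of_le (fun k => by positivity) (fun k => ?_)
        ((summable_geometric_of_lt_one (abs_nonneg b) hb2'))
      calc |b| ^ (k + 2) ≤ |b| ^ k * 1 := by
            rw [pow_add]
            apply mul_le_mul_of_nonneg_left _ (by positivity)
            nlinarith [abs_nonneg b]
        _ = |b| ^ k := mul_one _
    calc |∑' k, f (k + 2)| ≤ ∑' k, |f (k + 2)| := by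
          simpa using norm_tsum_le_tsum_norm (f := fun k => f (k+2)) (by simpa using hsum2.abs)
      _ ≤ ∑' k : ℕ, |b| ^ (k + 2) := by
          apply Summable.tsum_le_tsum _ (hsum2.abs) hg
          intro k; exact term_abs_le ha hε hb hb2' (k + 2)
      _ = |b| ^ 2 * ∑' k : ℕ, |b| ^ k := by
          rw [← tsum_mul_left]
          apply tsum_congr; intro k; ring
      _ = |b| ^ 2 * (1 - |b|)⁻¹ := by rw [tsum_geometric_of_lt_one (abs_nonneg b) hb2']
      _ ≤ 2 * b ^ 2 := by
          have h1 : (1 - |b|)⁻¹ ≤ 2 := by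
            rw [inv_le_comm₀ (by linarith) (by norm_num)]
            linarith
          have h2 : |b| ^ 2 = b ^ 2 := sq_abs b
          nlinarith [sq_nonneg b]
  have hmid : |(-b * sCF a b ε (-2)) + b * sCF a 0 ε (-2)| ≤ b ^ 2 := by
    have : (-b * sCF a b ε (-2)) + b * sCF a 0 ε (-2)
        = -(b * (sCF a b ε (-2) - sCF a 0 ε (-2))) := by ring
    rw [this, abs_neg, abs_mul]
    calc |b| * |sCF a b ε (-2) - sCF a 0 ε (-2)| ≤ |b| * |b| :=
          mul_le_mul_of_nonneg_left (sCF_diff ha hε hb hb2' _) (abs_nonneg b)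
      _ = b ^ 2 := by rw [← sq_abs]; ring
  have : pFun a b ε - 1 + b * sCF a 0 ε (-2)
      = ((-b * sCF a b ε (-2)) + b * sCF a 0 ε (-2)) + ∑' k, f (k + 2) := by
    rw [hsplit, hf0, hf1]; ring
  rw [this]
  calc |((-b * sCF a b ε (-2)) + b * sCF a 0 ε (-2)) + ∑' k, f (k + 2)|
      ≤ |(-b * sCF a b ε (-2)) + b * sCF a 0 ε (-2)| + |∑' k, f (k + 2)| := abs_add_le _ _
    _ ≤ b ^ 2 + 2 * b ^ 2 := add_le_add hmid htail
    _ = 3 * b ^ 2 := by ring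

end AuxLemmas

theorem deriv_p_at_zero :
    ∀ a : ℝ, 1 < a → ∀ ε : ℤ → ℝ, (∀ n : ℤ, ε n = 1 ∨ ε n = -1) →
      HasDerivAt (fun b => pFun a b ε) (1 / (a * ε (-2))) 0 := by
  intro a ha ε hεor
  have hε := absε hεor
  have hεne : ε (-2) ≠ 0 := by
    intro h; have := hε (-2); rw [h, abs_zero] at this; linarith
  have hane : a ≠ 0 := by linarith
  have hd : (1 / (a * ε (-2))) = -(sCF a 0 ε (-2)) := by
    rw [sCF_at_zero ha hε, div_neg, neg_neg]
  rw [hasDerivAt_iff_tendsto_slope]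
  set d : ℝ := 1 / (a * ε (-2)) with hdd
  set r : ℝ := min ((a - 1) / 2) (1 / 2) with hr
  have hrpos : 0 < r := by
    apply lt_min <;> [linarith; norm_num]
  have hkey : ∀ᶠ x in 𝓝[≠] (0:ℝ), |slope (fun b => pFun a b ε) 0 x - d| ≤ 3 * |x| := by
    filter_upwards [self_mem_nhdsWithin,
      nhdsWithin_le_nhds (eventually_abs_sub_lt (0:ℝ) hrpos)] with x hx0 hxr
    simp only [sub_zero] at hxr
    have hx1 : |x| ≤ (a - 1) / 2 := le_of_lt (lt_of_lt_of_le hxr (min_le_left _ _))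
    have hx2 : |x| ≤ 1 / 2 := le_of_lt (lt_of_lt_of_le hxr (min_le_right _ _))
    have hb : 1 ≤ a - |x| := by linarith
    have hxne : x ≠ 0 := hx0
    have hslope : slope (fun b => pFun a b ε) 0 x = (pFun a x ε - 1) / x := by
      rw [slope_def_field]
      rw [pFun_at_zero ha hε]
      field_simp
      ring
    rw [hslope]
    have : (pFun a x ε - 1) / x - d = (pFun a x ε - 1 + x * sCF a 0 ε (-2)) / x := by
      rw [hd]
      field_simp
      ring
    rw [this, abs_div]
    rw [div_le_iff₀ (abs_pos.mpr hxne)]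
    calc |pFun a x ε - 1 + x * sCF a 0 ε (-2)| ≤ 3 * x ^ 2 := pFun_key ha hε hb hx2
      _ = 3 * |x| * |x| := by rw [← sq_abs]; ring
  have h0 : Tendsto (fun x : ℝ => 3 * |x|) (𝓝[≠] (0:ℝ)) (𝓝 0) := by
    have : Tendsto (fun x : ℝ => 3 * |x|) (𝓝 (0:ℝ)) (𝓝 (3 * |(0:ℝ)|)) :=
      (continuous_const.mul continuous_abs).tendsto 0
    simpa using this.mono_left nhdsWithin_le_nhds
  rw [tendsto_iff_dist_tendsto_zero]
  apply squeeze_zero' (Eventually.of_forall fun x => dist_nonneg) _ h0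
  filter_upwards [hkey] with x hx
  rwa [Real.dist_eq]
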